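/- Consider in ℝ (n = 1) the single-inequality system x ≤ α with nominal data ā = 1, b̄ = α, so F(ā, b̄) = (−∞, α]. Then the Lipschitz upper semicontinuity modulus of the fully perturbed feasible mapping F(a,b) = {x ∈ ℝ : ax ≤ b} at (1, α) equals |α| + 1; consequently, letting α → +∞, the (global) Hoffman constant of F over its domain is infinite. -/

import Mathlib

open Metric

/-- Lipschitz upper semicontinuity modulus of the fully perturbed feasible mapping
`F(a,b) = {x : a·x ≤ b}` in one variable, at the nominal parameter `(ā, b̄)`, with the
parameter norm `‖(a,b)‖ = max {|a|, |b|}` (value in `ℝ≥0∞`, `inf ∅ = ∞`). -/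
lemma infDist_Iic' (α x : ℝ) : infDist x (Set.Iic α) = max (x - α) 0 := by
  rcases le_or_gt x α with h | h
  · rw [infDist_zero_of_mem (show x ∈ Set.Iic α from h), max_eq_right (by linarith)]
  · have hne : (Set.Iic α).Nonempty := ⟨α, le_refl α⟩
    have h1 : infDist x (Set.Iic α) ≤ x - α := by
      have := infDist_le_dist_of_mem (x := x) (show α ∈ Set.Iic α from le_refl α)
      rwa [Real.dist_eq, abs_of_pos (by linarith)] at this
    have h2 : x - α ≤ infDist x (Set.Iic α) := by
      by_contra hc
      push_neg at hc
      obtain ⟨y, hy, hd⟩ := (infDist_lt_iff hne).mp hc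
      rw [Real.dist_eq] at hd
      have : y ≤ α := hy
      have := le_abs_self (x - y)
      linarith
    rw [max_eq_left (by linarith)]
    linarith

noncomputable def lipuscF1 (abar bbar : ℝ) : ENNReal :=
  sInf (ENNReal.ofReal '' {κ : ℝ | 0 ≤ κ ∧ ∃ ε > (0 : ℝ),
    ∀ a b : ℝ, max |a - abar| |b - bbar| < ε →
      ∀ x : ℝ, a * x ≤ b →
        infDist x {z : ℝ | abar * z ≤ bbar} ≤ κ * max |a - abar| |b - bbar|})

/-- For the single inequality `x ≤ α` (nominal data `ā = 1`, `b̄ = α`, feasible set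
`(−∞, α]`), the Lipschitz upper semicontinuity modulus of `F` at `(1, α)` equals
`|α| + 1`; consequently (letting `α → +∞`) the global Hoffman constant of `F` over
its domain is infinite. -/
theorem stmt14 :
    (∀ α : ℝ, lipuscF1 1 α = ENNReal.ofReal (|α| + 1)) ∧
    ¬∃ κ : ℝ, ∀ a₁ b₁ a₂ b₂ x₁ : ℝ,
        ({x : ℝ | a₂ * x ≤ b₂}).Nonempty → a₁ * x₁ ≤ b₁ →
        infDist x₁ {x : ℝ | a₂ * x ≤ b₂} ≤ κ * max |a₁ - a₂| |b₁ - b₂| := by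
  constructor
  · intro α
    have habs : (0:ℝ) ≤ |α| := abs_nonneg α
    have hset : {z : ℝ | (1:ℝ) * z ≤ α} = Set.Iic α := by ext z; simp
    apply le_antisymm
    · -- upper bound
      apply ENNReal.le_of_forall_pos_le_add
      intro η hη _
      have hη' : (0:ℝ) < (η:ℝ) := hη
      set κ : ℝ := |α| + 1 + (η:ℝ) with hκ
      have hκpos : 0 < κ := by positivity
      have hmem : ENNReal.ofReal κ ∈ (ENNReal.ofReal '' {κ : ℝ | 0 ≤ κ ∧ ∃ ε > (0 : ℝ),
          ∀ a b : ℝ, max |a - 1| |b - α| < ε →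
            ∀ x : ℝ, a * x ≤ b →
              infDist x {z : ℝ | 1 * z ≤ α} ≤ κ * max |a - 1| |b - α|}) := by
        refine ⟨κ, ⟨hκpos.le, (η:ℝ)/κ, by positivity, ?_⟩, rfl⟩
        intro a b hd x hax
        set δ : ℝ := max |a - 1| |b - α| with hδdef
        have hδ0 : 0 ≤ δ := le_trans (abs_nonneg _) (le_max_left _ _)
        have ha : |a - 1| ≤ δ := le_max_left _ _
        have hb : |b - α| ≤ δ := le_max_right _ _
        have hκδ : κ * δ < (η:ℝ) := by
          have := mul_lt_mul_of_pos_left hd hκpos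
          rwa [mul_div_cancel₀ _ (ne_of_gt hκpos)] at this
        have hδ1 : δ < 1 := by
          by_contra hc
          push_neg at hc
          nlinarith
        rw [hset, infDist_Iic']
        rcases le_or_gt x α with hx | hx
        · rw [max_eq_right (by linarith)]
          positivity
        · rw [max_eq_left (by nlinarith)]
          rcases eq_or_lt_of_le hδ0 with hδz | hδpos
          · exfalso
            have ha1 : a = 1 := by
              have e : |a - 1| = 0 := le_antisymm (by linarith) (abs_nonneg _)
              have := abs_eq_zero.mp e; linarith
            have hb1 : b = α := by
              have e : |b - α| = 0 := le_antisymm (by linarith) (abs_nonneg _)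
              have := abs_eq_zero.mp e; linarith
            rw [ha1, hb1, one_mul] at hax
            linarith
          · have ha' : 1 - δ ≤ a := by
              have := abs_le.mp ha; linarith [this.1]
            have hb' : b ≤ α + δ := by
              have := abs_le.mp hb; linarith [this.2]
            have hαa : α * (1 - a) ≤ |α| * δ := by
              calc α * (1 - a) ≤ |α * (1 - a)| := le_abs_self _
                _ = |α| * |a - 1| := by rw [abs_mul, abs_sub_comm]
                _ ≤ |α| * δ := by nlinarith
            have key : a * (x - α) ≤ δ * (1 + |α|) := by nlinarith
            have key2 : (1 - δ) * (x - α) ≤ δ * (1 + |α|) := by nlinarith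
            nlinarith [mul_lt_mul_of_pos_right hκδ hδpos]
      calc lipuscF1 1 α ≤ ENNReal.ofReal κ := sInf_le hmem
        _ = ENNReal.ofReal (|α| + 1) + ENNReal.ofReal (η:ℝ) := by
            rw [← ENNReal.ofReal_add (by positivity) hη'.le]
        _ = ENNReal.ofReal (|α| + 1) + η := by rw [ENNReal.ofReal_coe_nnreal]
    · -- lower bound
      apply le_sInf
      rintro c ⟨κ, ⟨hκ0, ε, hε, hprop⟩, rfl⟩
      apply ENNReal.ofReal_le_ofReal
      rcases le_or_gt 0 α with hα | hα
      · -- α ≥ 0 : take a = 1 - δ, b = α + δ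
        set δ : ℝ := min (ε/2) (1/2) with hδdef
        have hδpos : 0 < δ := by positivity
        have hδε : δ < ε := lt_of_le_of_lt (min_le_left _ _) (by linarith)
        have hδ1 : δ < 1 := lt_of_le_of_lt (min_le_right _ _) (by norm_num)
        have hmax : max |(1 - δ) - 1| |(α + δ) - α| = δ := by
          simp only [show (1 - δ) - 1 = -δ by ring, show (α + δ) - α = δ by ring,
            abs_neg, abs_of_pos hδpos, max_self]
        have hx : (1 - δ) * ((α + δ) / (1 - δ)) ≤ α + δ := by
          rw [mul_div_cancel₀ _ (by linarith : (1:ℝ) - δ ≠ 0)]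
        have := hprop (1 - δ) (α + δ) (by rw [hmax]; exact hδε) ((α + δ) / (1 - δ)) hx
        rw [hset, infDist_Iic', hmax] at this
        have hxα : (α + δ) / (1 - δ) - α = δ * (1 + α) / (1 - δ) := by
          rw [div_sub' (by linarith : (1:ℝ) - δ ≠ 0)]
          ring_nf
        rw [hxα, max_eq_left (div_nonneg (by nlinarith) (by linarith))] at this
        rw [div_le_iff₀ (by linarith : (0:ℝ) < 1 - δ)] at this
        rw [abs_of_nonneg hα]
        nlinarith [mul_nonneg (mul_nonneg hκ0 hδpos.le) hδpos.le, mul_pos hδpos hδpos]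
      · -- α < 0 : take a = 1 + δ, b = α + δ
        rw [abs_of_neg hα]
        by_contra hc
        push_neg at hc
        obtain ⟨g, hg, hgpos⟩ : ∃ g : ℝ, g = (-α + 1) - κ ∧ 0 < g := ⟨_, rfl, by linarith⟩
        set δ : ℝ := min (min (ε/2) (-α/2)) (g/(κ+1)) with hδdef
        have hδpos : 0 < δ :=
          lt_min (lt_min (by linarith) (by linarith)) (div_pos hgpos (by linarith))
        have hδε : δ < ε := lt_of_le_of_lt (le_trans (min_le_left _ _) (min_le_left _ _))
          (by linarith)
        have hδα : δ ≤ -α/2 := le_trans (min_le_left _ _) (min_le_right _ _)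
        have hκδ : κ * δ < g := by
          have h1 : δ ≤ g/(κ+1) := min_le_right _ _
          have h2 : κ * δ ≤ κ * (g/(κ+1)) := by nlinarith
          have h3 : κ * (g/(κ+1)) < g := by
            rw [mul_div_assoc'] at *
            rw [div_lt_iff₀ (by linarith : (0:ℝ) < κ + 1)]
            nlinarith
          linarith
        have hmax : max |(1 + δ) - 1| |(α + δ) - α| = δ := by
          simp only [show (1 + δ) - 1 = δ by ring, show (α + δ) - α = δ by ring,
            abs_of_pos hδpos, max_self]
        have hx : (1 + δ) * ((α + δ) / (1 + δ)) ≤ α + δ := by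
          rw [mul_div_cancel₀ _ (by linarith : (1:ℝ) + δ ≠ 0)]
        have := hprop (1 + δ) (α + δ) (by rw [hmax]; exact hδε) ((α + δ) / (1 + δ)) hx
        rw [hset, infDist_Iic', hmax] at this
        have hxα : (α + δ) / (1 + δ) - α = δ * (1 - α) / (1 + δ) := by
          rw [div_sub' (by linarith : (1:ℝ) + δ ≠ 0)]
          ring_nf
        rw [hxα, max_eq_left (div_nonneg (by nlinarith) (by linarith))] at this
        rw [div_le_iff₀ (by linarith : (0:ℝ) < 1 + δ)] at this
        nlinarith
  · rintro ⟨κ, h⟩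
    have hset : {x : ℝ | (1:ℝ) * x ≤ 0} = Set.Iic (0:ℝ) := by ext z; simp
    have hne : ({x : ℝ | (1:ℝ) * x ≤ 0}).Nonempty := ⟨0, by simp⟩
    have := h 0 0 1 0 (κ + 1) hne (by simp)
    rw [hset, infDist_Iic'] at this
    norm_num at this
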